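/- For a Galton-Watson branching process where each branching event produces k offspring (k ≠ 1 fixed), starting from one particle, with offspring distribution concentrated at k, if ω denotes the number of branching events up to time T and branchings occur at rate β per particle, then the Laplace transform E[e^{-c ω}] equals e^{c/(k-1)} / (1 - e^{βT(k-1)} + e^{c + βT(k-1)})^{1/(k-1)}. -/

import Mathlib

noncomputable def gwCoef (κ : ℝ) : ℕ → ℝ
  | 0 => 1
  | n + 1 => gwCoef κ n * (κ * n + 1) / (κ * ((n : ℝ) + 1))

lemma gw_closed_form (β κ : ℝ) (hβ : β ≠ 0) (hκ : κ ≠ 0)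
    (P : ℝ → ℕ → ℝ)
    (hP0 : ∀ t : ℝ, P t 0 = Real.exp (-β * t))
    (hPrec : ∀ (t : ℝ) (n : ℕ),
      P t (n + 1)
        = β * ∫ s in (0:ℝ)..t,
            P s n * (κ * n + 1)
              * Real.exp (-β * (κ + 1) * (t - s))
              * Real.exp (-β * (t - s) * (κ * n + 1 - 1))) :
    ∀ (n : ℕ) (t : ℝ),
      P t n = gwCoef κ n * Real.exp (-β * t) * (1 - Real.exp (-(β * κ) * t)) ^ n := by
  intro n
  induction n with
  | zero => intro t; simp [gwCoef, hP0 t]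
  | succ n ih =>
    intro t
    have hmul1 : ∀ s : ℝ, Real.exp (-(β * κ) * s) * Real.exp (β * κ * s) = 1 := by
      intro s
      rw [← Real.exp_add, show -(β * κ) * s + β * κ * s = 0 by ring, Real.exp_zero]
    have h1 : ∀ s : ℝ, (1 : ℝ) - Real.exp (-(β * κ) * s)
        = Real.exp (-(β * κ) * s) * (Real.exp (β * κ * s) - 1) := by
      intro s
      rw [mul_sub, hmul1 s, mul_one]
    have hpt : ∀ s : ℝ,
        P s n * (κ * n + 1) * Real.exp (-β * (κ + 1) * (t - s))
            * Real.exp (-β * (t - s) * (κ * n + 1 - 1))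
          = (gwCoef κ n * (κ * n + 1) * Real.exp (-(β * (κ * (n + 1) + 1)) * t))
              * (Real.exp (β * κ * s) * (Real.exp (β * κ * s) - 1) ^ n) := by
      intro s
      rw [ih s, h1 s, mul_pow]
      have h2 : Real.exp (-(β * κ) * s) ^ n * Real.exp (-β * s)
            * Real.exp (-β * (κ + 1) * (t - s)) * Real.exp (-β * (t - s) * (κ * n + 1 - 1))
          = Real.exp (-(β * (κ * (n + 1) + 1)) * t) * Real.exp (β * κ * s) := by
        rw [← Real.exp_nat_mul, ← Real.exp_add, ← Real.exp_add, ← Real.exp_add,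
          ← Real.exp_add, Real.exp_eq_exp]
        ring
      linear_combination (gwCoef κ n * (κ * n + 1) * (Real.exp (β * κ * s) - 1) ^ n) * h2
    rw [hPrec t n]
    rw [intervalIntegral.integral_congr (g := fun s =>
        (gwCoef κ n * (κ * n + 1) * Real.exp (-(β * (κ * (n + 1) + 1)) * t))
          * (Real.exp (β * κ * s) * (Real.exp (β * κ * s) - 1) ^ n))
      (fun s _ => hpt s)]
    rw [intervalIntegral.integral_const_mul]
    have hn1 : ((n : ℝ) + 1) ≠ 0 := by positivity
    have hFTC : (∫ s in (0:ℝ)..t, Real.exp (β * κ * s) * (Real.exp (β * κ * s) - 1) ^ n)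
        = (Real.exp (β * κ * t) - 1) ^ (n + 1) / (β * κ * ((n : ℝ) + 1)) := by
      have hder : ∀ s : ℝ, HasDerivAt
          (fun u : ℝ => (Real.exp (β * κ * u) - 1) ^ (n + 1) / (β * κ * ((n : ℝ) + 1)))
          (Real.exp (β * κ * s) * (Real.exp (β * κ * s) - 1) ^ n) s := by
        intro s
        have hlin : HasDerivAt (fun u : ℝ => β * κ * u) (β * κ) s := by
          simpa using (hasDerivAt_id s).const_mul (β * κ)
        have h3 := (((hlin.exp).sub_const 1).pow (n + 1)).div_const (β * κ * ((n : ℝ) + 1))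
        refine h3.congr_deriv ?_
        simp only [Nat.add_sub_cancel]
        push_cast
        field_simp
      rw [intervalIntegral.integral_eq_sub_of_hasDerivAt (fun s _ => hder s)
        ((Continuous.intervalIntegrable (by continuity) 0 t))]
      simp
    rw [hFTC]
    have h1t : (1 : ℝ) - Real.exp (-(β * κ) * t)
        = Real.exp (-(β * κ) * t) * (Real.exp (β * κ * t) - 1) := h1 t
    rw [show gwCoef κ (n + 1) = gwCoef κ n * (κ * n + 1) / (κ * ((n : ℝ) + 1)) from rfl]
    rw [h1t, mul_pow]
    have h2t : Real.exp (-(β * κ) * t) ^ (n + 1) * Real.exp (-β * t)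
        = Real.exp (-(β * (κ * (n + 1) + 1)) * t) := by
      rw [← Real.exp_nat_mul, ← Real.exp_add, Real.exp_eq_exp]
      push_cast
      ring
    rw [← h2t]
    field_simp




lemma gwCoef_pos {κ : ℝ} (hκ : 0 < κ) : ∀ n, 0 < gwCoef κ n := by
  intro n
  induction n with
  | zero => norm_num [gwCoef]
  | succ n ih =>
    have h1 : (0:ℝ) < κ * n + 1 := by positivity
    have h2 : (0:ℝ) < κ * ((n:ℝ) + 1) := by positivity
    rw [show gwCoef κ (n+1) = gwCoef κ n * (κ * n + 1) / (κ * ((n : ℝ) + 1)) from rfl]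
    positivity

lemma gwCoef_le_one {κ : ℝ} (hκ : 1 ≤ κ) : ∀ n, gwCoef κ n ≤ 1 := by
  have hκ0 : 0 < κ := lt_of_lt_of_le one_pos hκ
  intro n
  induction n with
  | zero => norm_num [gwCoef]
  | succ n ih =>
    rw [show gwCoef κ (n+1) = gwCoef κ n * (κ * n + 1) / (κ * ((n : ℝ) + 1)) from rfl]
    have h2 : (0:ℝ) < κ * ((n:ℝ) + 1) := by positivity
    rw [div_le_one h2]
    have : κ * n + 1 ≤ κ * ((n:ℝ) + 1) := by nlinarith
    nlinarith [gwCoef_pos hκ0 n, (gwCoef_pos hκ0 n).le]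

lemma gwCoef_rec {κ : ℝ} (hκ : κ ≠ 0) (n : ℕ) :
    ((n : ℝ) + 1) * gwCoef κ (n + 1) = ((n : ℝ) + 1/κ) * gwCoef κ n := by
  rw [show gwCoef κ (n+1) = gwCoef κ n * (κ * n + 1) / (κ * ((n : ℝ) + 1)) from rfl]
  have hn1 : ((n : ℝ) + 1) ≠ 0 := by positivity
  field_simp

lemma gwCoef_lower {κ : ℝ} (hκ : 1 ≤ κ) : ∀ n : ℕ, 1 ≤ n → 1/κ ≤ (n : ℝ) * gwCoef κ n := by
  have hκ0 : 0 < κ := lt_of_lt_of_le one_pos hκ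
  intro n
  induction n with
  | zero => omega
  | succ n ih =>
    intro _
    rcases Nat.eq_zero_or_pos n with h0 | h1
    · subst h0
      simp [gwCoef]
    · have := ih h1
      have hrec := gwCoef_rec hκ0.ne' n
      push_cast
      rw [hrec]
      have hpos := gwCoef_pos hκ0 n
      nlinarith [hpos.le, (by positivity : (0:ℝ) < 1/κ)]

lemma gw_binomial {κ : ℝ} (hκ : 1 ≤ κ) {x : ℝ} (hx0 : 0 ≤ x) (hx1 : x < 1) :
    ∑' n : ℕ, gwCoef κ n * x ^ n = (1 - x) ^ (-(1/κ) : ℝ) := by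
  have hκ0 : 0 < κ := lt_of_lt_of_le one_pos hκ
  set α : ℝ := 1/κ with hα
  have hα0 : 0 < α := by positivity
  set r : ℝ := (1 + x)/2 with hr
  have hxr : x < r := by rw [hr]; linarith
  have hr1 : r < 1 := by rw [hr]; linarith
  have hr0 : 0 < r := by rw [hr]; linarith
  -- summable bound for derivatives
  have hu : Summable (fun n : ℕ => (n : ℝ) * r ^ (n - 1)) := by
    have h := (summable_pow_mul_geometric_of_norm_lt_one 1
      (r := r) (by rwa [Real.norm_of_nonneg hr0.le])).mul_left r⁻¹
    apply h.congr
    intro n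
    cases n with
    | zero => simp
    | succ m =>
      simp only [Nat.add_sub_cancel, pow_one]
      rw [pow_succ]
      field_simp
  set t : Set ℝ := Set.Ioo (-r) r with ht
  have habs : ∀ y ∈ t, |y| ≤ r := by
    intro y hy
    exact le_of_lt (abs_lt.mpr ⟨hy.1, hy.2⟩)
  have hbound : ∀ (n : ℕ), ∀ y ∈ t,
      ‖gwCoef κ n * ((n : ℝ) * y ^ (n - 1))‖ ≤ (n : ℝ) * r ^ (n - 1) := by
    intro n y hy
    have h1 : |gwCoef κ n| ≤ 1 := by
      rw [abs_of_pos (gwCoef_pos hκ0 n)]; exact gwCoef_le_one hκ n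
    calc ‖gwCoef κ n * ((n : ℝ) * y ^ (n - 1))‖
        = |gwCoef κ n| * ((n : ℝ) * |y| ^ (n - 1)) := by
          rw [Real.norm_eq_abs, abs_mul, abs_mul, abs_pow, Nat.abs_cast]
      _ ≤ 1 * ((n : ℝ) * r ^ (n - 1)) := by
          gcongr
          exact habs y hy
      _ = (n : ℝ) * r ^ (n - 1) := one_mul _
  have hg : ∀ (n : ℕ) (y : ℝ),
      HasDerivAt (fun z : ℝ => gwCoef κ n * z ^ n)
        (gwCoef κ n * ((n : ℝ) * y ^ (n - 1))) y := by
    intro n y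
    exact (hasDerivAt_pow n y).const_mul _
  have h0t : (0:ℝ) ∈ t := ⟨by linarith, hr0⟩
  have hg0 : Summable (fun n : ℕ => gwCoef κ n * (0:ℝ) ^ n) := by
    apply summable_of_ne_finset_zero (s := {0})
    intro n hn
    have : n ≠ 0 := by simpa using hn
    simp [zero_pow this]
  have hDeriv : ∀ y ∈ t, HasDerivAt (fun z : ℝ => ∑' n : ℕ, gwCoef κ n * z ^ n)
      (∑' n : ℕ, gwCoef κ n * ((n : ℝ) * y ^ (n - 1))) y := by
    intro y hy
    exact hasDerivAt_tsum_of_isPreconnected hu isOpen_Ioo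
      (convex_Ioo _ _).isPreconnected (fun n z _ => hg n z) hbound h0t hg0 hy
  have hSy : ∀ y ∈ t, Summable (fun n : ℕ => gwCoef κ n * y ^ n) := by
    intro y hy
    apply Summable.of_norm_bounded (summable_geometric_of_lt_one hr0.le hr1)
    intro n
    have h1 : |gwCoef κ n| ≤ 1 := by
      rw [abs_of_pos (gwCoef_pos hκ0 n)]; exact gwCoef_le_one hκ n
    calc ‖gwCoef κ n * y ^ n‖ = |gwCoef κ n| * |y| ^ n := by
          rw [Real.norm_eq_abs, abs_mul, abs_pow]
      _ ≤ 1 * r ^ n := by gcongr; exact habs y hy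
      _ = r ^ n := one_mul _
  have hDy : ∀ y ∈ t, Summable (fun n : ℕ => gwCoef κ n * ((n : ℝ) * y ^ (n - 1))) := by
    intro y hy
    exact Summable.of_norm_bounded hu (fun n => hbound n y hy)
  -- the ODE identity
  have hODE : ∀ y ∈ t,
      (1 - y) * (∑' n : ℕ, gwCoef κ n * ((n : ℝ) * y ^ (n - 1)))
        = α * ∑' n : ℕ, gwCoef κ n * y ^ n := by
    intro y hy
    have hshift : Summable (fun n : ℕ => gwCoef κ (n+1) * (((n:ℝ) + 1) * y ^ n)) := by
      have := (summable_nat_add_iff 1).2 (hDy y hy)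
      apply this.congr
      intro n
      simp [Nat.add_sub_cancel]
    have hA : Summable (fun n : ℕ => ((n : ℝ) + α) * gwCoef κ n * y ^ n) := by
      apply hshift.congr
      intro n
      have := gwCoef_rec hκ0.ne' n
      rw [← hα] at this
      linear_combination y ^ n * this
    have hN : Summable (fun n : ℕ => (n : ℝ) * gwCoef κ n * y ^ n) := by
      have := (hDy y hy).mul_left y
      apply this.congr
      intro n
      cases n with
      | zero => simp
      | succ m =>
        simp only [Nat.add_sub_cancel]
        push_cast
        ring
    have h2 : (∑' n : ℕ, gwCoef κ n * ((n : ℝ) * y ^ (n - 1)))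
        = ∑' n : ℕ, ((n : ℝ) + α) * gwCoef κ n * y ^ n := by
      rw [Summable.tsum_eq_zero_add (hDy y hy)]
      simp only [Nat.cast_zero, zero_mul, mul_zero, zero_add]
      apply tsum_congr
      intro n
      simp only [Nat.add_sub_cancel]
      have := gwCoef_rec hκ0.ne' n
      rw [← hα] at this
      push_cast
      linear_combination y ^ n * this
    have h1 : y * (∑' n : ℕ, gwCoef κ n * ((n : ℝ) * y ^ (n - 1)))
        = ∑' n : ℕ, (n : ℝ) * gwCoef κ n * y ^ n := by
      rw [← tsum_mul_left]
      apply tsum_congr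
      intro n
      cases n with
      | zero => simp
      | succ m =>
        simp only [Nat.add_sub_cancel]
        push_cast
        ring
    calc (1 - y) * (∑' n : ℕ, gwCoef κ n * ((n : ℝ) * y ^ (n - 1)))
        = (∑' n : ℕ, gwCoef κ n * ((n : ℝ) * y ^ (n - 1)))
          - y * (∑' n : ℕ, gwCoef κ n * ((n : ℝ) * y ^ (n - 1))) := by ring
      _ = (∑' n : ℕ, ((n : ℝ) + α) * gwCoef κ n * y ^ n)
          - ∑' n : ℕ, (n : ℝ) * gwCoef κ n * y ^ n := by rw [h1, h2]
      _ = ∑' n : ℕ, (((n : ℝ) + α) * gwCoef κ n * y ^ n - (n : ℝ) * gwCoef κ n * y ^ n) := by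
          rw [Summable.tsum_sub hA hN]
      _ = ∑' n : ℕ, α * (gwCoef κ n * y ^ n) := by
          apply tsum_congr; intro n; ring
      _ = α * ∑' n : ℕ, gwCoef κ n * y ^ n := tsum_mul_left
  -- the product function is constant
  have hFder : ∀ y ∈ t, HasDerivAt
      (fun z : ℝ => (1 - z) ^ (α : ℝ) * ∑' n : ℕ, gwCoef κ n * z ^ n) 0 y := by
    intro y hy
    have h1pos : (0:ℝ) < 1 - y := by
      simp only [ht, Set.mem_Ioo] at hy
      linarith [hy.2, hr1]
    have hrpow : HasDerivAt (fun z : ℝ => (1 - z) ^ (α : ℝ))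
        (α * (1 - y) ^ (α - 1) * -1) y := by
      have h := Real.hasDerivAt_rpow_const (x := 1 - y) (p := α) (Or.inl h1pos.ne')
      have hlin : HasDerivAt (fun z : ℝ => 1 - z) (-1) y := (hasDerivAt_id y).const_sub 1
      exact h.comp y hlin
    have hprod := hrpow.mul (hDeriv y hy)
    have hzero : α * (1 - y) ^ (α - 1) * -1 * (∑' n : ℕ, gwCoef κ n * y ^ n)
        + (1 - y) ^ (α : ℝ) * (∑' n : ℕ, gwCoef κ n * ((n : ℝ) * y ^ (n - 1))) = 0 := by
      have hsplit : (1 - y) ^ (α : ℝ) = (1 - y) ^ (α - 1) * (1 - y) := by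
        rw [← Real.rpow_add_one h1pos.ne' (α - 1)]
        norm_num
      rw [hsplit]
      linear_combination (1 - y) ^ (α - 1) * (hODE y hy)
    rw [show (0:ℝ) = α * (1 - y) ^ (α - 1) * -1 * (∑' n : ℕ, gwCoef κ n * y ^ n)
        + (1 - y) ^ (α : ℝ) * (∑' n : ℕ, gwCoef κ n * ((n : ℝ) * y ^ (n - 1)))
        from hzero.symm]
    exact hprod
  have hsub : Set.Icc (0:ℝ) x ⊆ t := by
    intro y hy
    exact ⟨lt_of_lt_of_le (neg_lt_zero.mpr hr0) hy.1, lt_of_le_of_lt hy.2 hxr⟩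
  have hconst := constant_of_has_deriv_right_zero
    (f := fun z : ℝ => (1 - z) ^ (α : ℝ) * ∑' n : ℕ, gwCoef κ n * z ^ n)
    (fun y hy => (hFder y (hsub hy)).continuousAt.continuousWithinAt)
    (fun y hy => (hFder y (hsub (Set.Ico_subset_Icc_self hy))).hasDerivWithinAt)
    x ⟨hx0, le_refl x⟩
  have hS0 : (∑' n : ℕ, gwCoef κ n * (0:ℝ) ^ n) = 1 := by
    rw [tsum_eq_single 0 (fun n hn => by simp [zero_pow hn])]
    simp [gwCoef]
  rw [hS0, sub_zero, Real.one_rpow, one_mul] at hconst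
  have h1x : (0:ℝ) < 1 - x := by linarith
  have hSx : (∑' n : ℕ, gwCoef κ n * x ^ n) = ((1 - x) ^ (α : ℝ))⁻¹ :=
    eq_inv_of_mul_eq_one_left (by linarith [hconst] )
  rw [hSx, Real.rpow_neg h1x.le]

open MeasureTheory

/-- Laplace transform of the number of branching events for a single-type
(k offspring, k ≠ 1) continuous-time Galton-Watson process with rate β.
The distribution `P T n` of the number of branchings on `[0,T]` is
characterized by the renewal recurrence (last-branching decomposition). -/
theorem stmt_0
    (β T c : ℝ) (hβ : 0 < β) (hT : 0 < T)
    (k : ℕ) (hk : k ≠ 1)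
    (P : ℝ → ℕ → ℝ)
    (hP0 : ∀ t : ℝ, P t 0 = Real.exp (-β * t))
    (hPrec : ∀ (t : ℝ) (n : ℕ),
      P t (n + 1)
        = β * ∫ s in (0:ℝ)..t,
            P s n * ((k - 1 : ℝ) * n + 1)
              * Real.exp (-β * k * (t - s))
              * Real.exp (-β * (t - s) * ((k - 1 : ℝ) * n + 1 - 1)))
    (hSummable : Summable (fun n : ℕ => P T n * Real.exp (-c * n))) :
    ∑' n : ℕ, P T n * Real.exp (-c * n)
      = Real.exp (c / ((k : ℝ) - 1))
          / (1 - Real.exp (β * T * ((k : ℝ) - 1))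
              + Real.exp (c + β * T * ((k : ℝ) - 1))) ^ ((1 : ℝ) / ((k : ℝ) - 1)) := by
  have hκne : ((k:ℝ) - 1) ≠ 0 := by
    intro h
    apply hk
    have : (k:ℝ) = 1 := by linarith
    exact_mod_cast this
  have hPrec' : ∀ (t : ℝ) (n : ℕ),
      P t (n + 1) = β * ∫ s in (0:ℝ)..t,
        P s n * (((k:ℝ) - 1) * n + 1)
          * Real.exp (-β * (((k:ℝ) - 1) + 1) * (t - s))
          * Real.exp (-β * (t - s) * (((k:ℝ) - 1) * n + 1 - 1)) := by
    intro t n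
    rw [hPrec t n]
    congr 1
    apply intervalIntegral.integral_congr
    intro s _
    simp only
    norm_num
  have hclosed := gw_closed_form β ((k:ℝ) - 1) hβ.ne' hκne P hP0 hPrec'
  rcases Nat.lt_or_ge k 1 with hk0 | hk1
  · -- case k = 0
    have hk00 : k = 0 := by omega
    subst hk00
    have hm1 : ((0:ℕ):ℝ) - 1 = -1 := by norm_num
    rw [hm1] at hclosed
    have hz : ∀ n, gwCoef (-1) (n + 2) = 0 := by
      intro n
      induction n with
      | zero => norm_num [gwCoef]
      | succ m ih =>
        rw [show gwCoef (-1) (m + 3)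
          = gwCoef (-1) (m + 2) * ((-1) * (↑(m+2):ℝ) + 1) / ((-1) * ((↑(m+2):ℝ) + 1)) from rfl,
          ih]
        simp
    rw [tsum_eq_sum (s := ({0, 1} : Finset ℕ)) (by
      intro b hb
      simp only [Finset.mem_insert, Finset.mem_singleton] at hb
      push_neg at hb
      obtain ⟨m, rfl⟩ : ∃ m, b = m + 2 := ⟨b - 2, by omega⟩
      rw [hclosed (m + 2) T, hz m]
      ring)]
    rw [Finset.sum_pair (by norm_num : (0:ℕ) ≠ 1)]
    rw [hP0 T, hclosed 1 T]
    have hc1 : gwCoef (-1) 1 = -1 := by norm_num [gwCoef]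
    rw [hc1]
    have hE1 : Real.exp (-(β * -1) * T) = Real.exp (β * T) := by ring_nf
    rw [hE1]
    have hDpos : 0 < 1 - Real.exp (β * T * (((0:ℕ):ℝ) - 1)) + Real.exp (c + β * T * (((0:ℕ):ℝ) - 1)) := by
      have h1 : Real.exp (β * T * (((0:ℕ):ℝ) - 1)) < 1 := by
        rw [Real.exp_lt_one_iff]
        push_cast
        nlinarith
      have h2 := Real.exp_pos (c + β * T * (((0:ℕ):ℝ) - 1))
      linarith
    have hexpo : ((1:ℝ) / (((0:ℕ):ℝ) - 1)) = -1 := by norm_num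
    rw [hexpo, Real.rpow_neg_one, div_eq_mul_inv, inv_inv]
    push_cast
    norm_num
    rw [show c / -1 = -c by ring, Real.exp_add]
    have hAB : Real.exp (-(β * T)) * Real.exp (β * T) = 1 := by
      rw [← Real.exp_add]; simp
    have hC : Real.exp (-c) * Real.exp c = 1 := by
      rw [← Real.exp_add]; simp
    linear_combination Real.exp (-c) * hAB - Real.exp (-(β * T)) * hC
  · -- case k ≥ 2
    have hk2 : 2 ≤ k := by omega
    have hκ1 : (1:ℝ) ≤ (k:ℝ) - 1 := by
      have : (2:ℝ) ≤ (k:ℝ) := by exact_mod_cast hk2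
      linarith
    have hκ0 : (0:ℝ) < (k:ℝ) - 1 := lt_of_lt_of_le one_pos hκ1
    have hq1 : Real.exp (-(β * ((k:ℝ) - 1)) * T) < 1 := by
      rw [Real.exp_lt_one_iff]
      nlinarith [mul_pos (mul_pos hβ hκ0) hT]
    have hqpos := Real.exp_pos (-(β * ((k:ℝ) - 1)) * T)
    set x0 : ℝ := (1 - Real.exp (-(β * ((k:ℝ) - 1)) * T)) * Real.exp (-c) with hx0def
    have hx00 : 0 < x0 := by
      apply mul_pos (by linarith) (Real.exp_pos _)
    have stepA : ∀ n : ℕ, P T n * Real.exp (-c * n)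
        = Real.exp (-β * T) * (gwCoef ((k:ℝ) - 1) n * x0 ^ n) := by
      intro n
      rw [hclosed n T, hx0def, mul_pow]
      rw [show Real.exp (-c * (n:ℝ)) = Real.exp (-c) ^ n by
        rw [← Real.exp_nat_mul]; congr 1; ring]
      ring
    have htsum : ∑' n : ℕ, P T n * Real.exp (-c * n)
        = Real.exp (-β * T) * ∑' n : ℕ, gwCoef ((k:ℝ) - 1) n * x0 ^ n := by
      rw [tsum_congr stepA, tsum_mul_left]
    have hS2 : Summable (fun n : ℕ => gwCoef ((k:ℝ) - 1) n * x0 ^ n) :=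
      (summable_mul_left_iff (Real.exp_ne_zero (-β * T))).mp (hSummable.congr stepA)
    have hx01 : x0 < 1 := by
      by_contra hcon
      push_neg at hcon
      have hcmp : Summable (fun n : ℕ => (1/((k:ℝ) - 1)) * (1/(n:ℝ))) := by
        apply Summable.of_nonneg_of_le (fun n => by positivity) _ hS2
        intro n
        cases n with
        | zero => simp [gwCoef]
        | succ m =>
          have h1 : 1/((k:ℝ) - 1) ≤ ((m:ℝ) + 1) * gwCoef ((k:ℝ) - 1) (m + 1) := by
            have := gwCoef_lower hκ1 (m + 1) (by omega)
            push_cast at this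
            exact this
          have h2 : (1:ℝ) ≤ x0 ^ (m + 1) := one_le_pow₀ hcon
          have hcpos := gwCoef_pos hκ0 (m + 1)
          have hm1 : (0:ℝ) < (m:ℝ) + 1 := by positivity
          calc (1/((k:ℝ) - 1)) * (1/((m+1:ℕ):ℝ))
              ≤ gwCoef ((k:ℝ) - 1) (m + 1) := by
                push_cast
                rw [div_mul_div_comm, mul_one,
                  div_le_iff₀ (by positivity : (0:ℝ) < ((k:ℝ)-1) * ((m:ℝ)+1))]
                have h1' := (div_le_iff₀ hκ0).mp h1
                nlinarith [h1']
            _ ≤ gwCoef ((k:ℝ) - 1) (m + 1) * x0 ^ (m + 1) :=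
                le_mul_of_one_le_right hcpos.le h2
      have hsum1 := (summable_mul_left_iff
        (show (1/((k:ℝ) - 1)) ≠ 0 by positivity)).mp hcmp
      exact Real.not_summable_one_div_natCast hsum1
    have hbin := gw_binomial hκ1 hx00.le hx01
    rw [htsum, hbin]
    -- final algebra
    have hqG : Real.exp (-(β * ((k:ℝ) - 1)) * T)
        = (Real.exp (β * T * ((k:ℝ) - 1)))⁻¹ := by
      rw [← Real.exp_neg]
      congr 1
      ring
    have hGpos := Real.exp_pos (β * T * ((k:ℝ) - 1))
    have hcpos := Real.exp_pos c
    have hD : 1 - x0 = (1 - Real.exp (β * T * ((k:ℝ) - 1)) + Real.exp (c + β * T * ((k:ℝ) - 1)))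
        / (Real.exp c * Real.exp (β * T * ((k:ℝ) - 1))) := by
      rw [hx0def, hqG, Real.exp_add, Real.exp_neg]
      field_simp
      ring
    have hDpos : 0 < 1 - Real.exp (β * T * ((k:ℝ) - 1)) + Real.exp (c + β * T * ((k:ℝ) - 1)) := by
      have h1 : (0:ℝ) < 1 - x0 := by linarith
      have h2 : 1 - Real.exp (β * T * ((k:ℝ) - 1)) + Real.exp (c + β * T * ((k:ℝ) - 1))
          = (1 - x0) * (Real.exp c * Real.exp (β * T * ((k:ℝ) - 1))) := by
        rw [hD]
        field_simp
      rw [h2]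
      positivity
    have hL : (1 - x0) ^ (-(1/((k:ℝ) - 1)) : ℝ)
        = (Real.exp c * Real.exp (β * T * ((k:ℝ) - 1))) ^ ((1:ℝ)/((k:ℝ) - 1))
          / (1 - Real.exp (β * T * ((k:ℝ) - 1)) + Real.exp (c + β * T * ((k:ℝ) - 1)))
              ^ ((1:ℝ)/((k:ℝ) - 1)) := by
      rw [hD, Real.rpow_neg (by positivity),
        Real.div_rpow hDpos.le (by positivity), inv_div]
    have hEG : (Real.exp c * Real.exp (β * T * ((k:ℝ) - 1))) ^ ((1:ℝ)/((k:ℝ) - 1))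
        = Real.exp (c / ((k:ℝ) - 1)) * Real.exp (β * T) := by
      rw [Real.mul_rpow (Real.exp_pos _).le (Real.exp_pos _).le,
        ← Real.exp_mul, ← Real.exp_mul]
      congr 1
      · congr 1
        field_simp
      · congr 1
        field_simp
    rw [hL, hEG]
    have hne : (1 - Real.exp (β * T * ((k:ℝ) - 1)) + Real.exp (c + β * T * ((k:ℝ) - 1)))
        ^ ((1:ℝ)/((k:ℝ) - 1)) ≠ 0 := (Real.rpow_pos_of_pos hDpos _).ne'
    have hee : Real.exp (-β * T) * Real.exp (β * T) = 1 := by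
      rw [← Real.exp_add]
      norm_num
    field_simp
    ring_nf
    rw [← Real.exp_add, Real.exp_eq_one_iff]
    ring
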